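/- arXiv:1406.6910 — 2 statements merged into one kernel-verified Lean document; each statement's English description precedes it below -/
import Mathlib

section
/- For every s ∈ [0, √2], the forward orbit of s under f is eventually periodic — that is, there exist natural numbers m < n with f^(m)(s) = f^(n)(s) — if and only if s ∈ ℚ(√2). -/
noncomputable section

/-- `β = √2 - 1`. -/
def β : ℝ := Real.sqrt 2 - 1

/-- `ω = √2 + 1`. -/
def ω : ℝ := Real.sqrt 2 + 1

/-- The break points `Δ_i`. -/
def Δ (i : ℤ) : ℝ :=
  if i < 0 then β ^ i.natAbs
  else if i = 0 then β
  else Real.sqrt 2 - β ^ i.natAbs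

/-- The intervals `I_i`. -/
def Iint (i : ℤ) : Set ℝ :=
  if i < 0 then Set.Ioc (Δ (i - 1)) (Δ i)
  else if i = 0 then Set.Ioo β 1
  else Set.Ico (Δ i) (Δ (i + 1))

/-- The defining formula of `f` on the interval `I_i`. -/
def fval (i : ℤ) (s : ℝ) : ℝ :=
  if i < 0 then ω ^ (i.natAbs + 1) * (Δ i - s)
  else if i = 0 then ω * (s - β)
  else ω ^ (i.natAbs + 1) * (s - Δ i)

/-- `f` is the renormalization map: `f 0 = f √2 = 0` and on each interval `I_i`
    it is given by the corresponding affine formula. These conditions determine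
    `f` uniquely on `[0, √2]`. -/
def IsLuroth (f : ℝ → ℝ) : Prop :=
  f 0 = 0 ∧ f (Real.sqrt 2) = 0 ∧ ∀ i : ℤ, ∀ s ∈ Iint i, f s = fval i s

/-- `ℚ(√2)` as a subset of `ℝ`. -/
def QSqrt2 : Set ℝ := {x | ∃ a b : ℚ, x = (a : ℝ) + (b : ℝ) * Real.sqrt 2}

/-- `ℤ[√2]` as a subset of `ℝ`. -/
def ZSqrt2 : Set ℝ := {x | ∃ m n : ℤ, x = (m : ℝ) + (n : ℝ) * Real.sqrt 2}

/-- `M_d = {s ∈ [0,√2] : d·s ∈ ℤ[√2]}`. -/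
def Mset (d : ℤ) : Set ℝ :=
  {s | s ∈ Set.Icc 0 (Real.sqrt 2) ∧ (d : ℝ) * s ∈ ZSqrt2}

-- basic facts
lemma sq2 : Real.sqrt 2 * Real.sqrt 2 = 2 := Real.mul_self_sqrt (by norm_num)
lemma sqrt2_lt : Real.sqrt 2 < 1.5 := by
  nlinarith [sq2, Real.sqrt_nonneg 2]
lemma one_lt_sqrt2 : 1 < Real.sqrt 2 := by
  nlinarith [sq2, Real.sqrt_nonneg 2]
lemma β_pos : 0 < β := by simp [β]; exact one_lt_sqrt2
lemma β_lt_one : β < 1 := by simp only [β]; nlinarith [sqrt2_lt]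
lemma ω_pos : 0 < ω := by simp [ω]; positivity
lemma one_lt_ω : 1 < ω := by simp only [ω]; nlinarith [one_lt_sqrt2]
lemma βω : β * ω = 1 := by simp only [β, ω]; nlinarith [sq2]
lemma βωpow (k : ℕ) : β ^ k * ω ^ k = 1 := by
  rw [← mul_pow, βω, one_pow]
lemma ωβpow (k : ℕ) : ω ^ (k+1) * β ^ k = ω := by
  have h := βωpow k; linear_combination ω * h
lemma ω_sub_one : ω - 1 = Real.sqrt 2 := by simp [ω]

-- integer pair representations of powers of ω and β
def Pp : ℕ → ℤ × ℤ
| 0 => (1,0)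
| k+1 => ((Pp k).1 + 2*(Pp k).2, (Pp k).1 + (Pp k).2)

lemma Pp_spec (k : ℕ) : ((Pp k).1 : ℝ) + ((Pp k).2 : ℝ) * Real.sqrt 2 = ω ^ k := by
  induction k with
  | zero => simp [Pp]
  | succ k ih =>
    rw [pow_succ, ← ih]
    show ((((Pp k).1 + 2*(Pp k).2 : ℤ)) : ℝ) + (((Pp k).1 + (Pp k).2 : ℤ) : ℝ) * Real.sqrt 2 = _
    push_cast
    simp only [ω]
    linear_combination (-((Pp k).2:ℝ)) * sq2

lemma Pp_conj (k : ℕ) : ((Pp k).1 : ℝ) - ((Pp k).2 : ℝ) * Real.sqrt 2 = (-β) ^ k := by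
  induction k with
  | zero => simp [Pp]
  | succ k ih =>
    rw [pow_succ, ← ih]
    show ((((Pp k).1 + 2*(Pp k).2 : ℤ)) : ℝ) - (((Pp k).1 + (Pp k).2 : ℤ) : ℝ) * Real.sqrt 2 = _
    push_cast
    simp only [β]
    linear_combination (-((Pp k).2:ℝ)) * sq2

def Qp : ℕ → ℤ × ℤ
| 0 => (1,0)
| k+1 => (2*(Qp k).2 - (Qp k).1, (Qp k).1 - (Qp k).2)

lemma Qp_spec (k : ℕ) : ((Qp k).1 : ℝ) + ((Qp k).2 : ℝ) * Real.sqrt 2 = β ^ k := by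
  induction k with
  | zero => simp [Qp]
  | succ k ih =>
    rw [pow_succ, ← ih]
    show (((2*(Qp k).2 - (Qp k).1 : ℤ)) : ℝ) + (((Qp k).1 - (Qp k).2 : ℤ) : ℝ) * Real.sqrt 2 = _
    push_cast
    simp only [β]
    linear_combination (-((Qp k).2:ℝ)) * sq2

-- minimal k with β^(k+1) < t ≤ β^k
lemma exists_pow_sandwich {t : ℝ} (h1 : 0 < t) (h2 : t ≤ β) :
    ∃ k : ℕ, 1 ≤ k ∧ β ^ (k+1) < t ∧ t ≤ β ^ k := by
  have hex : ∃ n : ℕ, β ^ n < t := exists_pow_lt_of_lt_one h1 β_lt_one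
  classical
  let n := Nat.find hex
  have hn : β ^ n < t := Nat.find_spec hex
  have hn0 : n ≠ 0 := by
    intro h
    have : β ^ n = 1 := by rw [h]; simp
    rw [this] at hn
    exact absurd (h2.trans_lt β_lt_one) (not_lt.2 hn.le)
  obtain ⟨k, hk⟩ : ∃ k, n = k + 1 := ⟨n - 1, by omega⟩
  have hk1 : ¬ β ^ k < t := Nat.find_min hex (by omega)
  have hkge : 1 ≤ k := by
    by_contra h
    have hk0 : k = 0 := by omega
    have : β ^ n = β := by rw [hk, hk0]; simp
    rw [this] at hn
    linarith
  exact ⟨k, hkge, by rw [← hk]; exact hn, not_lt.1 hk1⟩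

/-- Case analysis for `f` on `(0, √2)`. -/
lemma cases_f {f : ℝ → ℝ} (hf : IsLuroth f) {s : ℝ}
    (hs : s ∈ Set.Ioo 0 (Real.sqrt 2)) :
    ∃ k : ℕ, 1 ≤ k ∧
      ((β ^ (k+1) < s ∧ s ≤ β ^ k ∧ f s = ω ^ (k+1) * (β ^ k - s)) ∨
       (β < s ∧ s < 1 ∧ f s = ω * (s - β)) ∨
       (Real.sqrt 2 - β ^ k ≤ s ∧ s < Real.sqrt 2 - β ^ (k+1) ∧
         f s = ω ^ (k+1) * (s - (Real.sqrt 2 - β ^ k)))) := by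
  obtain ⟨hs0, hs2⟩ := hs
  rcases le_or_gt s β with hsβ | hβs
  · obtain ⟨k, hk1, hlt, hle⟩ := exists_pow_sandwich hs0 hsβ
    refine ⟨k, hk1, Or.inl ⟨hlt, hle, ?_⟩⟩
    have hmem : s ∈ Iint (-(k:ℤ)) := by
      have hneg : -(k:ℤ) < 0 := by omega
      have habs : (-(k:ℤ)).natAbs = k := by omega
      have habs' : (-(k:ℤ) - 1).natAbs = k + 1 := by omega
      simp only [Iint, if_pos hneg, Δ, if_pos hneg, if_pos (show -(k:ℤ) - 1 < 0 by omega),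
        habs, habs']
      exact ⟨hlt, hle⟩
    have := hf.2.2 _ s hmem
    rw [this]
    have hneg : -(k:ℤ) < 0 := by omega
    have habs : (-(k:ℤ)).natAbs = k := by omega
    simp only [fval, if_pos hneg, Δ, if_pos hneg, habs]
  rcases lt_or_ge s 1 with hs1 | h1s
  · refine ⟨1, le_refl 1, Or.inr (Or.inl ⟨hβs, hs1, ?_⟩)⟩
    have hmem : s ∈ Iint 0 := by
      simp only [Iint]
      norm_num
      exact ⟨hβs, hs1⟩
    have := hf.2.2 0 s hmem
    rw [this]
    simp [fval]
  · have ht0 : 0 < Real.sqrt 2 - s := by linarith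
    have htβ : Real.sqrt 2 - s ≤ β := by simp only [β]; linarith
    obtain ⟨k, hk1, hlt, hle⟩ := exists_pow_sandwich ht0 htβ
    refine ⟨k, hk1, Or.inr (Or.inr ⟨by linarith, by linarith, ?_⟩)⟩
    have hpos : (0:ℤ) < (k:ℤ) := by omega
    have hmem : s ∈ Iint (k:ℤ) := by
      have h1 : ¬ ((k:ℤ) < 0) := by omega
      have h2 : ¬ ((k:ℤ) = 0) := by omega
      have h3 : ¬ ((k:ℤ) + 1 < 0) := by omega
      have h4 : ¬ ((k:ℤ) + 1 = 0) := by omega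
      have habs : ((k:ℤ)).natAbs = k := by omega
      have habs' : ((k:ℤ) + 1).natAbs = k + 1 := by omega
      simp only [Iint, if_neg h1, if_neg h2, Δ, if_neg h3, if_neg h4, habs, habs']
      exact ⟨by linarith, by linarith⟩
    have := hf.2.2 _ s hmem
    rw [this]
    have h1 : ¬ ((k:ℤ) < 0) := by omega
    have h2 : ¬ ((k:ℤ) = 0) := by omega
    have habs : ((k:ℤ)).natAbs = k := by omega
    simp only [fval, if_neg h1, if_neg h2, Δ, if_neg h1, habs]

lemma f_mem {f : ℝ → ℝ} (hf : IsLuroth f) {s : ℝ}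
    (hs : s ∈ Set.Icc 0 (Real.sqrt 2)) : f s ∈ Set.Icc 0 (Real.sqrt 2) := by
  rcases eq_or_lt_of_le hs.1 with h0 | h0
  · rw [← h0, hf.1]; exact ⟨le_refl 0, Real.sqrt_nonneg 2⟩
  rcases eq_or_lt_of_le hs.2 with h2 | h2
  · rw [h2, hf.2.1]; exact ⟨le_refl 0, Real.sqrt_nonneg 2⟩
  obtain ⟨k, hk1, hcase⟩ := cases_f hf ⟨h0, h2⟩
  have hωp : (0:ℝ) < ω ^ (k+1) := pow_pos ω_pos _
  have hA := ωβpow k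
  have hB := βωpow (k+1)
  have hω1 := ω_sub_one
  rcases hcase with ⟨hlt, hle, heq⟩ | ⟨hlt, hle, heq⟩ | ⟨hlt, hle, heq⟩
  · constructor
    · rw [heq]; nlinarith
    · rw [heq]; nlinarith
  · have := βω
    constructor
    · rw [heq]; nlinarith [ω_pos]
    · rw [heq]; nlinarith [ω_pos]
  · constructor
    · rw [heq]; nlinarith
    · rw [heq]; nlinarith

lemma iter_mem {f : ℝ → ℝ} (hf : IsLuroth f) {s : ℝ}
    (hs : s ∈ Set.Icc 0 (Real.sqrt 2)) (j : ℕ) :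
    f^[j] s ∈ Set.Icc 0 (Real.sqrt 2) := by
  induction j with
  | zero => simpa using hs
  | succ j ih => rw [Function.iterate_succ_apply']; exact f_mem hf ih

-- QSqrt2 closure properties
lemma QS_rat (a : ℚ) : ((a:ℝ)) ∈ QSqrt2 := ⟨a, 0, by simp⟩
lemma QS_zero : (0:ℝ) ∈ QSqrt2 := ⟨0, 0, by simp⟩
lemma QS_sqrt2 : Real.sqrt 2 ∈ QSqrt2 := ⟨0, 1, by simp⟩
lemma QS_add {x y : ℝ} (hx : x ∈ QSqrt2) (hy : y ∈ QSqrt2) : x + y ∈ QSqrt2 := by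
  obtain ⟨a, b, rfl⟩ := hx; obtain ⟨c, d, rfl⟩ := hy
  exact ⟨a + c, b + d, by push_cast; ring⟩
lemma QS_neg {x : ℝ} (hx : x ∈ QSqrt2) : -x ∈ QSqrt2 := by
  obtain ⟨a, b, rfl⟩ := hx
  exact ⟨-a, -b, by push_cast; ring⟩
lemma QS_sub {x y : ℝ} (hx : x ∈ QSqrt2) (hy : y ∈ QSqrt2) : x - y ∈ QSqrt2 := by
  rw [sub_eq_add_neg]; exact QS_add hx (QS_neg hy)
lemma QS_mul {x y : ℝ} (hx : x ∈ QSqrt2) (hy : y ∈ QSqrt2) : x * y ∈ QSqrt2 := by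
  obtain ⟨a, b, rfl⟩ := hx; obtain ⟨c, d, rfl⟩ := hy
  refine ⟨a * c + 2 * b * d, a * d + b * c, ?_⟩
  push_cast
  linear_combination ((b:ℝ) * d) * sq2
lemma QS_β : β ∈ QSqrt2 := QS_sub QS_sqrt2 (by exact_mod_cast QS_rat 1)
lemma QS_ω : ω ∈ QSqrt2 := QS_add QS_sqrt2 (by exact_mod_cast QS_rat 1)
lemma QS_one : (1:ℝ) ∈ QSqrt2 := by exact_mod_cast QS_rat 1
lemma QS_pow {x : ℝ} (hx : x ∈ QSqrt2) (k : ℕ) : x ^ k ∈ QSqrt2 := by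
  induction k with
  | zero => simpa using QS_one
  | succ k ih => rw [pow_succ]; exact QS_mul ih hx

lemma QS_inv {y : ℝ} (hy : y ∈ QSqrt2) (h : y ≠ 0) : y⁻¹ ∈ QSqrt2 := by
  obtain ⟨a, b, rfl⟩ := hy
  have hab : (a:ℝ)*a - 2*(b*b) ≠ 0 := by
    intro hz
    rcases eq_or_ne b 0 with hb | hb
    · subst hb
      have ha : (a:ℝ) = 0 := by
        push_cast at hz
        nlinarith [hz]
      exact h (by rw [ha]; push_cast; simp)
    · have hb' : (b:ℝ) ≠ 0 := by exact_mod_cast hb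
      have h2 : ((a/b : ℚ) : ℝ)^2 = 2 := by
        push_cast
        field_simp
        nlinarith [hz]
      have hs : Real.sqrt 2 = |((a/b : ℚ) : ℝ)| := by
        rw [← Real.sqrt_sq_eq_abs, h2]
      have hirr := irrational_sqrt_two
      rw [hs] at hirr
      have hcast : |((a/b : ℚ) : ℝ)| = ((|a/b| : ℚ) : ℝ) := by push_cast; simp
      rw [hcast] at hirr
      exact hirr ⟨|a/b|, rfl⟩
  set D : ℚ := a*a - 2*(b*b) with hD
  have hDne : (D:ℝ) ≠ 0 := by rw [hD]; push_cast; exact hab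
  refine ⟨a / D, -(b / D), ?_⟩
  refine (eq_inv_of_mul_eq_one_left ?_).symm
  push_cast
  rw [hD] at hDne ⊢
  push_cast at hDne ⊢
  have key : ((a:ℝ)*a - 2*(b*b)) * (((a:ℝ)*a - 2*(b*b))⁻¹) = 1 := mul_inv_cancel₀ hDne
  simp only [div_eq_mul_inv]
  linear_combination key + (-(((a:ℝ)*a - 2*(b*b))⁻¹)*b*b) * sq2

lemma QS_div {x y : ℝ} (hx : x ∈ QSqrt2) (hy : y ∈ QSqrt2) (h : y ≠ 0) :
    x / y ∈ QSqrt2 := by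
  rw [div_eq_mul_inv]; exact QS_mul hx (QS_inv hy h)

lemma QS_βpow (k : ℕ) : β ^ k ∈ QSqrt2 := QS_pow QS_β k
lemma QS_ωpow (k : ℕ) : ω ^ k ∈ QSqrt2 := QS_pow QS_ω k

/-- If `f s ∈ ℚ(√2)` then `s ∈ ℚ(√2)`. -/
lemma back {f : ℝ → ℝ} (hf : IsLuroth f) {s : ℝ}
    (hs : s ∈ Set.Icc 0 (Real.sqrt 2)) (h : f s ∈ QSqrt2) : s ∈ QSqrt2 := by
  rcases eq_or_lt_of_le hs.1 with h0 | h0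
  · rw [← h0]; exact QS_zero
  rcases eq_or_lt_of_le hs.2 with h2 | h2
  · rw [h2]; exact QS_sqrt2
  obtain ⟨k, hk1, hcase⟩ := cases_f hf ⟨h0, h2⟩
  have hβω := βωpow (k+1)
  have hωp : (0:ℝ) < ω ^ (k+1) := pow_pos ω_pos _
  rcases hcase with ⟨hlt, hle, heq⟩ | ⟨hlt, hle, heq⟩ | ⟨hlt, hle, heq⟩
  · have : s = β ^ k - β ^ (k+1) * f s := by
      rw [heq]; nlinarith [hβω]
    rw [this]
    exact QS_sub (QS_βpow k) (QS_mul (QS_βpow (k+1)) h)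
  · have : s = β + β * f s := by
      rw [heq]; nlinarith [βω]
    rw [this]
    exact QS_add QS_β (QS_mul QS_β h)
  · have : s = (Real.sqrt 2 - β ^ k) + β ^ (k+1) * f s := by
      rw [heq]; nlinarith [hβω]
    rw [this]
    exact QS_add (QS_sub QS_sqrt2 (QS_βpow k)) (QS_mul (QS_βpow (k+1)) h)

lemma back_iter {f : ℝ → ℝ} (hf : IsLuroth f) {s : ℝ}
    (hs : s ∈ Set.Icc 0 (Real.sqrt 2)) (j : ℕ) (h : f^[j] s ∈ QSqrt2) :
    s ∈ QSqrt2 := by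
  induction j generalizing s with
  | zero => simpa using h
  | succ j ih =>
    rw [Function.iterate_succ_apply] at h
    exact back hf hs (ih (f_mem hf hs) h)

/-- Linear form of the iterates when the orbit avoids the endpoints. -/
lemma linear_form {f : ℝ → ℝ} (hf : IsLuroth f) {t : ℝ}
    (ht : t ∈ Set.Icc 0 (Real.sqrt 2))
    (havoid : ∀ j : ℕ, f^[j] t ∈ Set.Ioo 0 (Real.sqrt 2)) (j : ℕ) :
    ∃ (ε : ℝ) (E : ℕ) (c : ℝ), (ε = 1 ∨ ε = -1) ∧ j ≤ E ∧ c ∈ QSqrt2 ∧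
      f^[j] t = ε * ω ^ E * t + c := by
  induction j with
  | zero => exact ⟨1, 0, 0, Or.inl rfl, le_refl 0, QS_zero, by simp⟩
  | succ j ih =>
    obtain ⟨ε, E, c, hε, hE, hc, heq⟩ := ih
    obtain ⟨k, hk1, hcase⟩ := cases_f hf (havoid j)
    rw [Function.iterate_succ_apply']
    rcases hcase with ⟨hlt, hle, hfeq⟩ | ⟨hlt, hle, hfeq⟩ | ⟨hlt, hle, hfeq⟩
    · refine ⟨-ε, E + (k+1), ω - ω ^ (k+1) * c, ?_, by omega, ?_, ?_⟩
      · rcases hε with h | h <;> simp [h]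
      · exact QS_sub QS_ω (QS_mul (QS_ωpow (k+1)) hc)
      · rw [hfeq, heq]
        have h1 := ωβpow k
        have hpow : ω ^ (E + (k+1)) = ω ^ E * ω ^ (k+1) := pow_add ω E (k+1)
        linear_combination h1 + (ε * t) * hpow
    · refine ⟨ε, E + 1, ω * c - 1, hε, by omega, ?_, ?_⟩
      · exact QS_sub (QS_mul QS_ω hc) QS_one
      · rw [hfeq, heq]
        have hpow : ω ^ (E + 1) = ω ^ E * ω := pow_succ ω E
        linear_combination (-1 : ℝ) * βω - (ε * t) * hpow
    · refine ⟨ε, E + (k+1), ω ^ (k+1) * c - ω ^ (k+1) * Real.sqrt 2 + ω, hε, by omega, ?_, ?_⟩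
      · exact QS_add (QS_sub (QS_mul (QS_ωpow (k+1)) hc)
          (QS_mul (QS_ωpow (k+1)) QS_sqrt2)) QS_ω
      · rw [hfeq, heq]
        have h1 := ωβpow k
        have hpow : ω ^ (E + (k+1)) = ω ^ E * ω ^ (k+1) := pow_add ω E (k+1)
        linear_combination h1 - (ε * t) * hpow

/-- A periodic point in `[0,√2]` lies in `ℚ(√2)`. -/
lemma periodic_mem {f : ℝ → ℝ} (hf : IsLuroth f) {t : ℝ}
    (ht : t ∈ Set.Icc 0 (Real.sqrt 2)) {p : ℕ} (hp : 1 ≤ p)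
    (hper : f^[p] t = t) : t ∈ QSqrt2 := by
  by_cases havoid : ∀ j : ℕ, f^[j] t ∈ Set.Ioo 0 (Real.sqrt 2)
  · obtain ⟨ε, E, c, hε, hE, hc, heq⟩ := linear_form hf ht havoid p
    rw [hper] at heq
    have hωE : 1 < ω ^ E := one_lt_pow₀ one_lt_ω (by omega)
    have hne : (1 : ℝ) - ε * ω ^ E ≠ 0 := by
      rcases hε with h | h <;> rw [h] <;> nlinarith
    have hteq : t = c / (1 - ε * ω ^ E) := by
      field_simp
      linarith [heq]
    rw [hteq]
    refine QS_div hc (QS_sub QS_one ?_) hne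
    rcases hε with h | h <;> rw [h]
    · simpa using QS_ωpow E
    · simpa using QS_neg (QS_ωpow E)
  · push_neg at havoid
    obtain ⟨j, hj⟩ := havoid
    have hmem := iter_mem hf ht j
    have : f^[j] t = 0 ∨ f^[j] t = Real.sqrt 2 := by
      rcases eq_or_lt_of_le hmem.1 with h0 | h0
      · exact Or.inl h0.symm
      rcases eq_or_lt_of_le hmem.2 with h2 | h2
      · exact Or.inr h2
      · exact absurd ⟨h0, h2⟩ hj
    rcases this with h | h
    · exact back_iter hf ht j (by rw [h]; exact QS_zero)
    · exact back_iter hf ht j (by rw [h]; exact QS_sqrt2)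

/-- One step of the orbit preserves representability over `ℤ[√2]/d` with a
conjugate-norm inequality. -/
lemma main_step {f : ℝ → ℝ} (hf : IsLuroth f) (d : ℤ) (hd : 0 < d) {s : ℝ}
    (hs : s ∈ Set.Icc 0 (Real.sqrt 2)) (m n : ℤ)
    (hrep : (d:ℝ) * s = (m:ℝ) + (n:ℝ) * Real.sqrt 2) :
    ∃ m' n' : ℤ, (d:ℝ) * f s = (m':ℝ) + (n':ℝ) * Real.sqrt 2 ∧
      |(m':ℝ) - (n':ℝ) * Real.sqrt 2| ≤ β * |(m:ℝ) - (n:ℝ) * Real.sqrt 2| + d := by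
  have hd' : (0:ℝ) < d := by exact_mod_cast hd
  have hβ0 := β_pos
  have hβ1 := β_lt_one
  rcases eq_or_lt_of_le hs.1 with h0 | h0
  · refine ⟨0, 0, by rw [← h0, hf.1]; simp, ?_⟩
    simp
    positivity
  rcases eq_or_lt_of_le hs.2 with h2 | h2
  · refine ⟨0, 0, by rw [h2, hf.2.1]; simp, ?_⟩
    simp
    positivity
  obtain ⟨k, hk1, hcase⟩ := cases_f hf ⟨h0, h2⟩
  have hP := Pp_spec (k+1)
  have hPc := Pp_conj (k+1)
  set p : ℤ := (Pp (k+1)).1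
  set q : ℤ := (Pp (k+1)).2
  have hA := ωβpow k
  have hB := βωpow (k+1)
  have hβk : β ^ (k+1) ≤ β := by
    calc β ^ (k+1) ≤ β ^ 1 := pow_le_pow_of_le_one hβ0.le hβ1.le (by omega)
    _ = β := pow_one β
  have hβabs : |(-β) ^ (k+1)| = β ^ (k+1) := by
    rw [abs_pow, abs_neg, abs_of_pos hβ0]
  rcases hcase with ⟨hlt, hle, heq⟩ | ⟨hlt, hle, heq⟩ | ⟨hlt, hle, heq⟩
  · -- f s = ω^(k+1) * (β^k - s) = ω - ω^(k+1) s
    refine ⟨d - (p*m + 2*q*n), d - (p*n + q*m), ?_, ?_⟩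
    · rw [heq]
      push_cast
      have : (d:ℝ) * (ω ^ (k+1) * (β ^ k - s)) =
          (d:ℝ) * (ω ^ (k+1) * β ^ k) - ω ^ (k+1) * ((d:ℝ) * s) := by ring
      rw [this, hA, hrep, ← hP]
      simp only [ω]
      linear_combination (-(q:ℝ)*n) * sq2
    · have hconj : ((d - (p*m + 2*q*n) : ℤ) : ℝ) - ((d - (p*n + q*m) : ℤ) : ℝ) * Real.sqrt 2
          = -β * d - (-β) ^ (k+1) * ((m:ℝ) - n * Real.sqrt 2) := by
        rw [← hPc]
        push_cast
        simp only [β]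
        linear_combination ((q:ℝ)*n) * sq2
      rw [hconj]
      calc |(-β) * d - (-β) ^ (k+1) * ((m:ℝ) - n * Real.sqrt 2)|
          ≤ |(-β) * d| + |(-β) ^ (k+1) * ((m:ℝ) - n * Real.sqrt 2)| := abs_sub _ _
        _ = β * d + β ^ (k+1) * |(m:ℝ) - n * Real.sqrt 2| := by
            rw [abs_mul, abs_mul, hβabs, abs_neg, abs_of_pos hβ0, abs_of_pos hd']
        _ ≤ β * |(m:ℝ) - n * Real.sqrt 2| + d := by
            have h1 : β * d ≤ d := by nlinarith
            have h2 : β ^ (k+1) * |(m:ℝ) - n * Real.sqrt 2| ≤ β * |(m:ℝ) - n * Real.sqrt 2| := by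
              apply mul_le_mul_of_nonneg_right hβk (abs_nonneg _)
            linarith
  · -- f s = ω (s - β) = ω s - 1
    refine ⟨m + 2*n - d, m + n, ?_, ?_⟩
    · rw [heq]
      push_cast
      have : (d:ℝ) * (ω * (s - β)) = ω * ((d:ℝ) * s) - (d:ℝ) * (ω * β) := by ring
      rw [this, hrep, show ω * β = 1 by linear_combination βω]
      simp only [ω]
      linear_combination ((n:ℝ)) * sq2
    · have hconj : ((m + 2*n - d : ℤ) : ℝ) - ((m + n : ℤ) : ℝ) * Real.sqrt 2
          = -β * ((m:ℝ) - n * Real.sqrt 2) - d := by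
        push_cast
        simp only [β]
        linear_combination (-(n:ℝ)) * sq2
      rw [hconj]
      calc |(-β) * ((m:ℝ) - n * Real.sqrt 2) - d|
          ≤ |(-β) * ((m:ℝ) - n * Real.sqrt 2)| + |(d:ℝ)| := abs_sub _ _
        _ = β * |(m:ℝ) - n * Real.sqrt 2| + d := by
            rw [abs_mul, abs_neg, abs_of_pos hβ0, abs_of_pos hd']
        _ ≤ _ := le_refl _
  · -- f s = ω^(k+1) (s - (√2 - β^k)) = ω^(k+1) s - ω^(k+1) √2 + ω
    refine ⟨p*m + 2*q*n - 2*d*q + d, p*n + q*m - d*p + d, ?_, ?_⟩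
    · rw [heq]
      push_cast
      have : (d:ℝ) * (ω ^ (k+1) * (s - (Real.sqrt 2 - β ^ k))) =
          ω ^ (k+1) * ((d:ℝ) * s) - (d:ℝ) * (ω ^ (k+1) * Real.sqrt 2)
            + (d:ℝ) * (ω ^ (k+1) * β ^ k) := by ring
      rw [this, hA, hrep, ← hP]
      simp only [ω]
      linear_combination ((q:ℝ)*n - (d:ℝ)*q) * sq2
    · have hconj : ((p*m + 2*q*n - 2*d*q + d : ℤ) : ℝ) - ((p*n + q*m - d*p + d : ℤ) : ℝ) * Real.sqrt 2
          = (-β) ^ (k+1) * ((m:ℝ) - n * Real.sqrt 2) + (d:ℝ) * ((-β) ^ (k+1)) * Real.sqrt 2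
            - β * d := by
        rw [← hPc]
        push_cast
        simp only [β]
        linear_combination ((d:ℝ)*q - (q:ℝ)*n) * sq2
      rw [hconj]
      have hs2 : (1:ℝ) < Real.sqrt 2 := one_lt_sqrt2
      have hβk2 : β ^ (k+1) ≤ β ^ 2 := pow_le_pow_of_le_one hβ0.le hβ1.le (by omega)
      calc |(-β) ^ (k+1) * ((m:ℝ) - n * Real.sqrt 2) + (d:ℝ) * ((-β) ^ (k+1)) * Real.sqrt 2 - β * d|
          ≤ |(-β) ^ (k+1) * ((m:ℝ) - n * Real.sqrt 2)|
            + |(d:ℝ) * ((-β) ^ (k+1)) * Real.sqrt 2| + |β * d| := by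
            calc _ ≤ |(-β) ^ (k+1) * ((m:ℝ) - n * Real.sqrt 2) + (d:ℝ) * ((-β) ^ (k+1)) * Real.sqrt 2| + |β * d| := abs_sub _ _
              _ ≤ _ := by gcongr; exact abs_add_le _ _
        _ = β ^ (k+1) * |(m:ℝ) - n * Real.sqrt 2| + d * β ^ (k+1) * Real.sqrt 2 + β * d := by
            rw [abs_mul, abs_mul, abs_mul, abs_mul, hβabs, abs_of_pos hd',
              abs_of_pos (Real.sqrt_pos.2 (by norm_num)), abs_of_pos hβ0]
        _ ≤ β * |(m:ℝ) - n * Real.sqrt 2| + d := by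
            have h2 : β ^ (k+1) * |(m:ℝ) - n * Real.sqrt 2| ≤ β * |(m:ℝ) - n * Real.sqrt 2| :=
              mul_le_mul_of_nonneg_right hβk (abs_nonneg _)
            have hβ2 : β ^ 2 * Real.sqrt 2 + β ≤ 1 := by
              simp only [β]
              nlinarith [sq2, sqrt2_lt, one_lt_sqrt2]
            have h3 : d * β ^ (k+1) * Real.sqrt 2 + β * d ≤ d := by
              have : d * β ^ (k+1) * Real.sqrt 2 ≤ d * β ^ 2 * Real.sqrt 2 := by
                have hprod := mul_nonneg (mul_nonneg (sub_nonneg.2 hβk2) hd'.le)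
                  (Real.sqrt_nonneg 2)
                nlinarith [hprod]
              nlinarith
            linarith

lemma twod_le_B {d B : ℝ} (hd : 0 < d) (hB : 2*d ≤ B) :
    β * B + d ≤ B := by
  have h1 := one_lt_sqrt2
  have h2 := sqrt2_lt
  simp only [β]
  nlinarith

/-- The orbit invariant: bounded representation over `ℤ[√2]/d`. -/
lemma orbit_invariant {f : ℝ → ℝ} (hf : IsLuroth f) (d : ℤ) (hd : 0 < d)
    {s : ℝ} (hs : s ∈ Set.Icc 0 (Real.sqrt 2)) (m0 n0 : ℤ)
    (hrep : (d:ℝ) * s = (m0:ℝ) + (n0:ℝ) * Real.sqrt 2) (B : ℝ)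
    (hB0 : |(m0:ℝ) - (n0:ℝ) * Real.sqrt 2| ≤ B) (hB2 : 2*(d:ℝ) ≤ B) (j : ℕ) :
    ∃ m n : ℤ, (d:ℝ) * f^[j] s = (m:ℝ) + (n:ℝ) * Real.sqrt 2 ∧
      |(m:ℝ) - (n:ℝ) * Real.sqrt 2| ≤ B := by
  induction j with
  | zero => exact ⟨m0, n0, by simpa using hrep, hB0⟩
  | succ j ih =>
    obtain ⟨m, n, hmn, hbd⟩ := ih
    obtain ⟨m', n', hmn', hbd'⟩ := main_step hf d hd (iter_mem hf hs j) m n hmn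
    rw [Function.iterate_succ_apply']
    refine ⟨m', n', hmn', ?_⟩
    have hd' : (0:ℝ) < d := by exact_mod_cast hd
    have := twod_le_B hd' hB2
    have hβB : β * |(m:ℝ) - (n:ℝ) * Real.sqrt 2| ≤ β * B :=
      mul_le_mul_of_nonneg_left hbd β_pos.le
    linarith

/-- Membership in `ℚ(√2)` gives an integer representation with denominator. -/
lemma initial_rep {s : ℝ} (h : s ∈ QSqrt2) :
    ∃ (d : ℤ) (m n : ℤ), 0 < d ∧ (d:ℝ) * s = (m:ℝ) + (n:ℝ) * Real.sqrt 2 := by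
  obtain ⟨a, b, rfl⟩ := h
  refine ⟨(a.den : ℤ) * b.den, a.num * b.den, b.num * a.den, ?_, ?_⟩
  · positivity
  · have ha : ((a.den : ℝ)) * (a : ℝ) = (a.num : ℝ) := by
      rw [Rat.cast_def]
      field_simp
    have hb : ((b.den : ℝ)) * (b : ℝ) = (b.num : ℝ) := by
      rw [Rat.cast_def]
      field_simp
    push_cast
    linear_combination ((b.den:ℝ)) * ha + ((a.den:ℝ)) * Real.sqrt 2 * hb

/-- Reverse direction: membership in `ℚ(√2)` implies eventual periodicity. -/
lemma reverse_dir {f : ℝ → ℝ} (hf : IsLuroth f) {s : ℝ}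
    (hs : s ∈ Set.Icc 0 (Real.sqrt 2)) (h : s ∈ QSqrt2) :
    ∃ m n : ℕ, m < n ∧ f^[m] s = f^[n] s := by
  obtain ⟨d, m0, n0, hd, hrep⟩ := initial_rep h
  have hd' : (0:ℝ) < d := by exact_mod_cast hd
  set M : ℤ := |m0| + 2*|n0| + 2*d with hM
  have hMpos : (0:ℝ) < M := by
    have : 0 ≤ |m0| := abs_nonneg _
    have : 0 ≤ |n0| := abs_nonneg _
    push_cast
    positivity
  have hs2 := one_lt_sqrt2
  have hB0 : |(m0:ℝ) - (n0:ℝ) * Real.sqrt 2| ≤ (M:ℝ) := by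
    have h1 : |(m0:ℝ) - (n0:ℝ) * Real.sqrt 2| ≤ |(m0:ℝ)| + |(n0:ℝ)| * Real.sqrt 2 := by
      calc _ ≤ |(m0:ℝ)| + |(n0:ℝ) * Real.sqrt 2| := abs_sub _ _
        _ = _ := by rw [abs_mul, abs_of_pos (by positivity : (0:ℝ) < Real.sqrt 2)]
    have h2 : |(n0:ℝ)| * Real.sqrt 2 ≤ 2 * |(n0:ℝ)| := by
      nlinarith [sqrt2_lt, abs_nonneg ((n0:ℝ))]
    have hcast : |(m0:ℝ)| = ((|m0| : ℤ) : ℝ) := by push_cast; simp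
    have hcast' : |(n0:ℝ)| = ((|n0| : ℤ) : ℝ) := by push_cast; simp
    rw [hM]
    push_cast
    rw [← Int.cast_abs, ← Int.cast_abs]
    linarith
  have hB2 : 2*(d:ℝ) ≤ (M:ℝ) := by
    rw [hM]; push_cast
    have : (0:ℝ) ≤ |m0| := by positivity
    have : (0:ℝ) ≤ |n0| := by positivity
    rw [← Int.cast_abs, ← Int.cast_abs] at *
    push_cast at *
    linarith [abs_nonneg m0, abs_nonneg n0]
  have key := orbit_invariant hf d hd hs m0 n0 hrep (M:ℝ) hB0 hB2
  -- bounds on the integer coefficients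
  have bound : ∀ j : ℕ, ∃ m n : ℤ,
      (d:ℝ) * f^[j] s = (m:ℝ) + (n:ℝ) * Real.sqrt 2 ∧ |m| ≤ M ∧ |n| ≤ M := by
    intro j
    obtain ⟨m, n, hmn, hbd⟩ := key j
    have hmem := iter_mem hf hs j
    have habs1 : |(m:ℝ) + (n:ℝ) * Real.sqrt 2| ≤ (M:ℝ) := by
      rw [← hmn, abs_mul, abs_of_pos hd', abs_of_nonneg hmem.1]
      calc (d:ℝ) * f^[j] s ≤ (d:ℝ) * Real.sqrt 2 := by
            exact mul_le_mul_of_nonneg_left hmem.2 hd'.le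
        _ ≤ 2 * (d:ℝ) := by nlinarith [sqrt2_lt]
        _ ≤ (M:ℝ) := hB2
    refine ⟨m, n, hmn, ?_, ?_⟩
    · have : |(m:ℝ)| ≤ (M:ℝ) := by
        have := abs_add_le ((m:ℝ) + (n:ℝ) * Real.sqrt 2) ((m:ℝ) - (n:ℝ) * Real.sqrt 2)
        have h2 : (m:ℝ) + (n:ℝ) * Real.sqrt 2 + ((m:ℝ) - (n:ℝ) * Real.sqrt 2) = 2*m := by ring
        rw [h2] at this
        rw [abs_mul] at this
        simp only [abs_two] at this
        cases abs_cases ((m:ℝ)) <;> cases abs_cases ((m:ℝ) + (n:ℝ)*Real.sqrt 2) <;>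
          cases abs_cases ((m:ℝ) - (n:ℝ)*Real.sqrt 2) <;> linarith
      exact_mod_cast (by rwa [← Int.cast_abs] at this : ((|m|:ℤ):ℝ) ≤ (M:ℝ))
    · have : |(n:ℝ)| ≤ (M:ℝ) := by
        have habs : |(m:ℝ) + (n:ℝ) * Real.sqrt 2 - ((m:ℝ) - (n:ℝ) * Real.sqrt 2)| ≤ 2*(M:ℝ) := by
          calc _ ≤ |(m:ℝ) + (n:ℝ) * Real.sqrt 2| + |(m:ℝ) - (n:ℝ) * Real.sqrt 2| := abs_sub _ _
            _ ≤ 2*(M:ℝ) := by linarith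
        have h2 : (m:ℝ) + (n:ℝ) * Real.sqrt 2 - ((m:ℝ) - (n:ℝ) * Real.sqrt 2)
            = 2 * ((n:ℝ) * Real.sqrt 2) := by ring
        rw [h2, abs_mul, abs_two, abs_mul,
          abs_of_pos (by positivity : (0:ℝ) < Real.sqrt 2)] at habs
        nlinarith [abs_nonneg ((n:ℝ)), one_lt_sqrt2]
      exact_mod_cast (by rwa [← Int.cast_abs] at this : ((|n|:ℤ):ℝ) ≤ (M:ℝ))
  classical
  -- pigeonhole
  set g : ℕ → ℤ × ℤ := fun j => ((bound j).choose, (bound j).choose_spec.choose) with hg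
  have hgspec : ∀ j : ℕ, (d:ℝ) * f^[j] s = ((g j).1:ℝ) + ((g j).2:ℝ) * Real.sqrt 2
      ∧ |(g j).1| ≤ M ∧ |(g j).2| ≤ M := fun j => (bound j).choose_spec.choose_spec
  set T := (Finset.Icc (-M) M) ×ˢ (Finset.Icc (-M) M) with hT
  have hmemT : ∀ j : ℕ, g j ∈ T := by
    intro j
    obtain ⟨-, h1, h2⟩ := hgspec j
    simp only [hT, Finset.mem_product, Finset.mem_Icc]
    exact ⟨abs_le.1 h1, abs_le.1 h2⟩
  let G : ℕ → {x // x ∈ T} := fun j => ⟨g j, hmemT j⟩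
  obtain ⟨j, k, hjk, hGeq⟩ := Finite.exists_ne_map_eq_of_infinite G
  have hpair : g j = g k := by simpa [G, Subtype.ext_iff] using hGeq
  have heq : f^[j] s = f^[k] s := by
    have h1 := (hgspec j).1
    have h2 := (hgspec k).1
    rw [hpair, ← h2] at h1
    exact mul_left_cancel₀ (ne_of_gt hd') h1
  rcases hjk.lt_or_gt with h | h
  · exact ⟨j, k, h, heq⟩
  · exact ⟨k, j, h, heq.symm⟩

/-- for every `s ∈ [0,√2]`, the orbit of `s` under `f` is eventually
periodic iff `s ∈ ℚ(√2)`. -/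
theorem luroth_eventually_periodic_iff_mem_Qsqrt2
    (f : ℝ → ℝ) (hf : IsLuroth f) :
    ∀ s ∈ Set.Icc (0 : ℝ) (Real.sqrt 2),
      (∃ m n : ℕ, m < n ∧ f^[m] s = f^[n] s) ↔ s ∈ QSqrt2 := by
  intro s hs
  constructor
  · rintro ⟨m, n, hmn, heq⟩
    have ht := iter_mem hf hs m
    have hper : f^[n - m] (f^[m] s) = f^[m] s := by
      rw [← Function.iterate_add_apply, show n - m + m = n by omega]
      exact heq.symm
    have hQ := periodic_mem hf ht (p := n - m) (by omega) hper
    exact back_iter hf hs m hQ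
  · exact reverse_dir hf hs
end
end

section
/- For every s ∈ ℚ(√2) ∩ [0, √2], the forward orbit {f^(n)(s) : n ∈ ℕ} is a finite set. -/
noncomputable section

namespace LurothAux

open Real

local notation "√2" => Real.sqrt 2

def φ : ℤ√2 →+* ℝ := Zsqrtd.toReal (by norm_num)

lemma φ_apply (z : ℤ√2) : φ z = z.re + z.im * √2 := by
  simp [φ, Zsqrtd.toReal_apply]

def ψ (z : ℤ√2) : ℝ := φ (star z)

lemma ψ_apply (z : ℤ√2) : ψ z = z.re - z.im * √2 := by
  simp [ψ, φ, Zsqrtd.toReal_apply, Zsqrtd.star_mk, sub_eq_add_neg]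

lemma ψ_mul (a b : ℤ√2) : ψ (a * b) = ψ a * ψ b := by
  unfold ψ; rw [star_mul, mul_comm, map_mul]

lemma ψ_sub (a b : ℤ√2) : ψ (a - b) = ψ a - ψ b := by
  unfold ψ; rw [star_sub, map_sub]

lemma ψ_pow (a : ℤ√2) (k : ℕ) : ψ (a ^ k) = (ψ a) ^ k := by
  unfold ψ; rw [star_pow, map_pow]

lemma ψ_intCast (n : ℤ) : ψ (n : ℤ√2) = n := by
  unfold ψ; rw [star_intCast, map_intCast]

/-- `β` as an element of `ℤ√2`. -/
def bb : ℤ√2 := ⟨-1, 1⟩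

/-- `ω` as an element of `ℤ√2`. -/
def ww : ℤ√2 := ⟨1, 1⟩

lemma φ_bb : φ bb = β := by simp [φ, Zsqrtd.toReal_apply, bb, β]; ring
lemma φ_ww : φ ww = ω := by simp [φ, Zsqrtd.toReal_apply, ww, ω]; ring
lemma φ_sqrtd : φ (Zsqrtd.sqrtd) = √2 := by simp [φ, Zsqrtd.toReal_apply]
lemma ψ_bb : ψ bb = -ω := by simp [ψ_apply, bb, ω]; ring
lemma ψ_ww : ψ ww = -β := by simp [ψ_apply, ww, β]
lemma ψ_sqrtd : ψ (Zsqrtd.sqrtd) = -√2 := by rw [ψ_apply]; simp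

lemma s2_sq : √2 ^ 2 = 2 := Real.sq_sqrt (by norm_num)
lemma s2_gt : (1 : ℝ) < √2 := by
  nlinarith [s2_sq, Real.sqrt_nonneg 2]
lemma s2_lt : √2 < 1.5 := by
  nlinarith [s2_sq, Real.sqrt_nonneg 2]
lemma β_pos : (0 : ℝ) < β := by unfold β; linarith [s2_gt]
lemma β_lt_one : β < 1 := by unfold β; linarith [s2_lt]
lemma ω_pos : (0 : ℝ) < ω := by unfold ω; linarith [s2_gt]
lemma βω : β * ω = 1 := by unfold β ω; nlinarith [s2_sq]

/-- Covering lemma: every `t ∈ (0, β]` lies in an interval `(β^(m+1), β^m]`, `m ≥ 1`. -/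
lemma exists_pow_interval (t : ℝ) (h0 : 0 < t) (h1 : t ≤ β) :
    ∃ m : ℕ, 1 ≤ m ∧ β ^ (m + 1) < t ∧ t ≤ β ^ m := by
  classical
  have hP : ∃ n, β ^ n < t := exists_pow_lt_of_lt_one h0 β_lt_one
  set N := Nat.find hP with hNdef
  have hN : β ^ N < t := Nat.find_spec hP
  have hN2 : 2 ≤ N := by
    by_contra h
    interval_cases N
    · simp at hN; linarith [β_lt_one]
    · simp at hN; linarith
  refine ⟨N - 1, by omega, ?_, ?_⟩
  · have e : N - 1 + 1 = N := by omega
    rw [e]; exact hN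
  · have := Nat.find_min hP (m := N - 1) (by omega)
    exact le_of_not_gt this

/-- The invariant set. -/
def P (d : ℤ) (K : ℝ) (x : ℝ) : Prop :=
  0 ≤ x ∧ x ≤ √2 ∧ ∃ z : ℤ√2, (d : ℝ) * x = φ z ∧ |ψ z| ≤ K

end LurothAux
namespace LurothAux

lemma K_nonneg {d : ℤ} {K : ℝ} (hd : 0 < d) (hK : (d : ℝ) * (2 + √2) / 2 ≤ K) :
    0 ≤ K := by
  have hd1 : (1 : ℝ) ≤ (d : ℝ) := by exact_mod_cast hd
  nlinarith [Real.sqrt_nonneg 2]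

set_option maxHeartbeats 1600000 in
/-- Key step: the set `P d K` is invariant under `f`. -/
lemma step (f : ℝ → ℝ) (hf : IsLuroth f) (d : ℤ) (K : ℝ) (hd : 0 < d)
    (hK : (d : ℝ) * (2 + √2) / 2 ≤ K) {x : ℝ} (hx : P d K x) : P d K (f x) := by
  obtain ⟨hx0, hx2, z, hz, hzK⟩ := hx
  have hK0 : 0 ≤ K := K_nonneg hd hK
  have hd1 : (1 : ℝ) ≤ (d : ℝ) := by exact_mod_cast hd
  have hP0 : P d K 0 := ⟨le_refl _, Real.sqrt_nonneg 2, 0, by simp, by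
    have : ψ (0 : ℤ√2) = 0 := by unfold ψ; simp
    rw [this]; simpa using hK0⟩
  rcases eq_or_lt_of_le hx0 with h0 | h0
  · rw [← h0, hf.1]; exact hP0
  rcases eq_or_lt_of_le hx2 with h2 | h2
  · rw [h2, hf.2.1]; exact hP0
  -- now 0 < x < √2
  have hβ0 := β_pos; have hβ1 := β_lt_one; have hω0 := ω_pos
  have hβω := βω; have hs2 := s2_sq; have hs2g := s2_gt; have hs2l := s2_lt
  rcases le_or_gt x β with hxb | hxb
  · -- negative index case
    obtain ⟨m, hm1, hml, hmu⟩ := exists_pow_interval x h0 hxb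
    have hfx : f x = ω ^ (m + 1) * (β ^ m - x) := by
      have hmem : x ∈ Iint (-(m : ℤ)) := by
        have hneg : (-(m : ℤ)) < 0 := by omega
        have h1 : ((-(m : ℤ)) - 1).natAbs = m + 1 := by omega
        have h2 : (-(m : ℤ)).natAbs = m := by omega
        simp only [Iint, if_pos hneg, Δ, Set.mem_Ioc, if_pos (show (-(m:ℤ)) - 1 < 0 by omega)]
        rw [h1, h2]
        exact ⟨hml, hmu⟩
      have hh := hf.2.2 _ x hmem
      rw [hh]
      simp only [fval, if_pos (show (-(m : ℤ)) < 0 by omega), Δ,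
        (show (-(m:ℤ)).natAbs = m by omega)]
    refine ⟨?_, ?_, ww ^ (m + 1) * ((d : ℤ√2) * bb ^ m - z), ?_, ?_⟩
    · rw [hfx]
      exact mul_nonneg (pow_nonneg hω0.le _) (by linarith)
    · rw [hfx]
      have e : ω ^ (m + 1) * (β ^ m - β ^ (m + 1)) = (β * ω) ^ m * ω - (β * ω) ^ (m + 1) := by
        rw [mul_pow, mul_pow]; ring
      rw [hβω, one_pow, one_pow] at e
      have hlt : ω ^ (m + 1) * (β ^ m - x) ≤ ω ^ (m + 1) * (β ^ m - β ^ (m + 1)) :=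
        mul_le_mul_of_nonneg_left (by linarith) (pow_nonneg hω0.le _)
      have : ω - 1 = √2 := by unfold ω; ring
      linarith
    · rw [hfx, map_mul, map_pow, map_sub, map_mul, map_intCast, map_pow, φ_ww, φ_bb, ← hz]
      ring
    · rw [ψ_mul, ψ_pow, ψ_sub, ψ_mul, ψ_intCast, ψ_pow, ψ_bb, ψ_ww,
        abs_mul, abs_pow, abs_neg, abs_of_pos hβ0]
      have h1 : |(d : ℝ) * (-ω) ^ m - ψ z| ≤ (d : ℝ) * ω ^ m + K := by
        calc |(d : ℝ) * (-ω) ^ m - ψ z| ≤ |(d : ℝ) * (-ω) ^ m| + |ψ z| := abs_sub _ _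
          _ ≤ (d : ℝ) * ω ^ m + K := by
              rw [abs_mul, abs_pow, abs_neg, abs_of_pos hω0, abs_of_pos (by linarith : (0:ℝ) < (d:ℝ))]
              linarith
      have hmul := mul_le_mul_of_nonneg_left hK (show (0:ℝ) ≤ 2 - √2 by linarith)
      calc β ^ (m + 1) * |(d : ℝ) * (-ω) ^ m - ψ z|
          ≤ β ^ (m + 1) * ((d : ℝ) * ω ^ m + K) :=
            mul_le_mul_of_nonneg_left h1 (pow_nonneg hβ0.le _)
        _ = (d : ℝ) * β * (β * ω) ^ m + β ^ (m + 1) * K := by rw [mul_pow]; ring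
        _ = (d : ℝ) * β + β ^ (m + 1) * K := by rw [hβω, one_pow]; ring
        _ ≤ (d : ℝ) * β + β * K := by
            have : β ^ (m + 1) ≤ β := pow_le_of_le_one hβ0.le hβ1.le (Nat.succ_ne_zero m)
            nlinarith
        _ ≤ K := by unfold β at *; nlinarith [hmul, hs2, hd1]
  rcases lt_or_ge x 1 with hx1 | hx1
  · -- index 0 case
    have hfx : f x = ω * (x - β) := by
      have hmem : x ∈ Iint 0 := by
        simp only [Iint]; norm_num; exact ⟨hxb, hx1⟩
      have := hf.2.2 0 x hmem
      rw [this]; simp [fval]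
    refine ⟨?_, ?_, ww * (z - (d : ℤ√2) * bb), ?_, ?_⟩
    · rw [hfx]
      exact mul_nonneg hω0.le (by linarith)
    · rw [hfx]; unfold ω β at *; nlinarith [hs2]
    · rw [hfx, map_mul, map_sub, map_mul, map_intCast, φ_ww, φ_bb, ← hz]
      ring
    · rw [ψ_mul, ψ_sub, ψ_mul, ψ_intCast, ψ_ww, ψ_bb, abs_mul, abs_neg, abs_of_pos hβ0]
      have h1 : |ψ z - (d : ℝ) * -ω| ≤ K + (d : ℝ) * ω := by
        calc |ψ z - (d : ℝ) * -ω| ≤ |ψ z| + |(d : ℝ) * -ω| := abs_sub _ _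
          _ ≤ K + (d : ℝ) * ω := by
              rw [abs_mul, abs_neg, abs_of_pos hω0, abs_of_pos (by linarith : (0:ℝ) < (d:ℝ))]
              linarith
      have hmul := mul_le_mul_of_nonneg_left hK (show (0:ℝ) ≤ 2 - √2 by linarith)
      calc β * |ψ z - (d : ℝ) * -ω| ≤ β * (K + (d : ℝ) * ω) :=
            mul_le_mul_of_nonneg_left h1 hβ0.le
        _ = β * K + (d : ℝ) * (β * ω) := by ring
        _ = β * K + (d : ℝ) := by rw [hβω, mul_one]
        _ ≤ K := by unfold β at *; nlinarith [hmul, hs2, hd1]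
  · -- positive index case
    have ht0 : 0 < √2 - x := by linarith
    have htb : √2 - x ≤ β := by unfold β; linarith
    obtain ⟨m, hm1, hml, hmu⟩ := exists_pow_interval _ ht0 htb
    have hfx : f x = ω ^ (m + 1) * (x - (√2 - β ^ m)) := by
      have hmem : x ∈ Iint (m : ℤ) := by
        have hpos : ¬((m : ℤ) < 0) := by omega
        have hne : ¬((m : ℤ) = 0) := by omega
        have h1 : ((m : ℤ)).natAbs = m := by omega
        have h2 : ((m : ℤ) + 1).natAbs = m + 1 := by omega
        simp only [Iint, if_neg hpos, if_neg hne, Δ, Set.mem_Ico,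
          if_neg (show ¬((m:ℤ) + 1 < 0) by omega), if_neg (show ¬((m:ℤ) + 1 = 0) by omega)]
        rw [h1, h2]
        constructor <;> linarith
      have hh := hf.2.2 _ x hmem
      rw [hh]
      simp only [fval, if_neg (show ¬((m : ℤ) < 0) by omega),
        if_neg (show ¬((m : ℤ) = 0) by omega), Δ, (show ((m:ℤ)).natAbs = m by omega)]
    refine ⟨?_, ?_, ww ^ (m + 1) * (z - (d : ℤ√2) * (Zsqrtd.sqrtd - bb ^ m)), ?_, ?_⟩
    · rw [hfx]
      exact mul_nonneg (pow_nonneg hω0.le _) (by linarith)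
    · rw [hfx]
      have e : ω ^ (m + 1) * (β ^ m - β ^ (m + 1)) = (β * ω) ^ m * ω - (β * ω) ^ (m + 1) := by
        rw [mul_pow, mul_pow]; ring
      rw [hβω, one_pow, one_pow] at e
      have hlt : ω ^ (m + 1) * (x - (√2 - β ^ m)) ≤ ω ^ (m + 1) * (β ^ m - β ^ (m + 1)) :=
        mul_le_mul_of_nonneg_left (by linarith) (pow_nonneg hω0.le _)
      have : ω - 1 = √2 := by unfold ω; ring
      linarith
    · rw [hfx, map_mul, map_pow, map_sub, map_mul, map_intCast, map_sub, map_pow,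
        φ_ww, φ_bb, φ_sqrtd, ← hz]
      ring
    · rw [ψ_mul, ψ_pow, ψ_sub, ψ_mul, ψ_intCast, ψ_sub, ψ_pow, ψ_bb, ψ_ww, ψ_sqrtd,
        abs_mul, abs_pow, abs_neg, abs_of_pos hβ0]
      have h1 : |ψ z - (d : ℝ) * (-√2 - (-ω) ^ m)| ≤ K + (d : ℝ) * (√2 + ω ^ m) := by
        calc |ψ z - (d : ℝ) * (-√2 - (-ω) ^ m)| ≤ |ψ z| + |(d : ℝ) * (-√2 - (-ω) ^ m)| :=
              abs_sub _ _
          _ ≤ K + (d : ℝ) * (√2 + ω ^ m) := by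
              rw [abs_mul, abs_of_pos (by linarith : (0:ℝ) < (d:ℝ))]
              have h2 : |(-√2 - (-ω) ^ m)| ≤ √2 + ω ^ m := by
                calc |(-√2 - (-ω) ^ m)| = |√2 + (-ω) ^ m| := by rw [← abs_neg]; ring_nf
                  _ ≤ |√2| + |(-ω) ^ m| := abs_add_le _ _
                  _ = √2 + ω ^ m := by
                      rw [abs_of_nonneg (Real.sqrt_nonneg 2), abs_pow, abs_neg, abs_of_pos hω0]
              have := mul_le_mul_of_nonneg_left h2 (by linarith : (0:ℝ) ≤ (d:ℝ))
              linarith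
      have hb2 : β ^ (m + 1) ≤ β ^ 2 := pow_le_pow_of_le_one hβ0.le hβ1.le (by omega)
      have hKd : (0:ℝ) ≤ K + (d : ℝ) * √2 := by nlinarith [Real.sqrt_nonneg 2]
      have hmul := mul_le_mul_of_nonneg_left hK (show (0:ℝ) ≤ 2 * √2 - 2 by linarith)
      calc β ^ (m + 1) * |ψ z - (d : ℝ) * (-√2 - (-ω) ^ m)|
          ≤ β ^ (m + 1) * (K + (d : ℝ) * (√2 + ω ^ m)) :=
            mul_le_mul_of_nonneg_left h1 (pow_nonneg hβ0.le _)
        _ = β ^ (m + 1) * (K + (d : ℝ) * √2) + (d : ℝ) * β * (β * ω) ^ m := by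
            rw [mul_pow]; ring
        _ = β ^ (m + 1) * (K + (d : ℝ) * √2) + (d : ℝ) * β := by rw [hβω, one_pow, mul_one]
        _ ≤ β ^ 2 * (K + (d : ℝ) * √2) + (d : ℝ) * β := by nlinarith [hb2, hKd]
        _ ≤ K := by unfold β at *; nlinarith [hmul, hs2, hd1, Real.sqrt_nonneg 2]

end LurothAux
namespace LurothAux

lemma P_finite (d : ℤ) (K : ℝ) (hd : 0 < d) : Set.Finite {x | P d K x} := by
  set A : ℤ := ⌈(d : ℝ) * √2 + K⌉ with hA
  apply Set.Finite.subset ((Set.finite_Icc ((-A, -A) : ℤ × ℤ) (A, A)).image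
    (fun p : ℤ × ℤ => ((p.1 : ℝ) + (p.2 : ℝ) * √2) / (d : ℝ)))
  rintro x ⟨hx0, hx2, z, hz, hzK⟩
  have hd0 : (0 : ℝ) < (d : ℝ) := by exact_mod_cast hd
  have hφ := φ_apply z
  have hψ := ψ_apply z
  have habs := abs_le.mp hzK
  have hφ0 : 0 ≤ φ z := by rw [← hz]; exact mul_nonneg hd0.le hx0
  have hφ2 : φ z ≤ (d : ℝ) * √2 := by rw [← hz]; exact mul_le_mul_of_nonneg_left hx2 hd0.le
  have e1 : (z.re : ℝ) = (φ z + ψ z) / 2 := by rw [hφ, hψ]; ring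
  have e2 : (z.im : ℝ) * √2 = (φ z - ψ z) / 2 := by rw [hφ, hψ]; ring
  have hK0 : 0 ≤ K := le_trans (abs_nonneg _) hzK
  have hre : |(z.re : ℝ)| ≤ (d : ℝ) * √2 + K := by
    rw [abs_le]; constructor <;> [rw [e1]; rw [e1]] <;> nlinarith [Real.sqrt_nonneg 2]
  have him2 : |(z.im : ℝ) * √2| ≤ (d : ℝ) * √2 + K := by
    rw [abs_le]; constructor <;> [rw [e2]; rw [e2]] <;> nlinarith [Real.sqrt_nonneg 2]
  have him : |(z.im : ℝ)| ≤ (d : ℝ) * √2 + K := by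
    have h1 : (1 : ℝ) ≤ √2 := s2_gt.le
    calc |(z.im : ℝ)| ≤ |(z.im : ℝ)| * √2 := by nlinarith [abs_nonneg (z.im : ℝ)]
      _ = |(z.im : ℝ) * √2| := by rw [abs_mul, abs_of_nonneg (by linarith : (0:ℝ) ≤ √2)]
      _ ≤ _ := him2
  have hAb : (d : ℝ) * √2 + K ≤ (A : ℝ) := Int.le_ceil _
  refine ⟨(z.re, z.im), ?_, ?_⟩
  · rw [Set.mem_Icc]
    obtain ⟨hre1, hre2⟩ := abs_le.mp hre
    obtain ⟨him1, him2'⟩ := abs_le.mp him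
    constructor <;> rw [Prod.mk_le_mk] <;> constructor
    · exact_mod_cast (show -(A : ℝ) ≤ (z.re : ℝ) by push_cast; linarith)
    · exact_mod_cast (show -(A : ℝ) ≤ (z.im : ℝ) by push_cast; linarith)
    · exact_mod_cast (show (z.re : ℝ) ≤ (A : ℝ) by linarith)
    · exact_mod_cast (show (z.im : ℝ) ≤ (A : ℝ) by linarith)
  · show ((z.re : ℝ) + (z.im : ℝ) * √2) / (d : ℝ) = x
    rw [div_eq_iff (ne_of_gt hd0), ← hφ, ← hz]; ring

end LurothAux

open LurothAux in
/-- for every `s ∈ ℚ(√2) ∩ [0,√2]`, the forward orbit of `s`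
under `f` is a finite set. -/
theorem luroth_orbit_finite (f : ℝ → ℝ) (hf : IsLuroth f) :
    ∀ s ∈ QSqrt2 ∩ Set.Icc (0 : ℝ) (Real.sqrt 2),
      Set.Finite (Set.range fun n : ℕ => f^[n] s) := by
  rintro s ⟨⟨a, b, rfl⟩, hs0, hs2⟩
  set d : ℤ := (a.den : ℤ) * (b.den : ℤ) with hd
  have hdpos : 0 < d := by
    rw [hd]
    exact mul_pos (by exact_mod_cast a.pos) (by exact_mod_cast b.pos)
  set z₀ : ℤ√2 := ⟨a.num * (b.den : ℤ), b.num * (a.den : ℤ)⟩ with hz0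
  have haden : ((a.den : ℝ)) ≠ 0 := Nat.cast_ne_zero.mpr a.den_nz
  have hbden : ((b.den : ℝ)) ≠ 0 := Nat.cast_ne_zero.mpr b.den_nz
  have haR : (a : ℝ) = (a.num : ℝ) / (a.den : ℝ) := by rw [Rat.cast_def]
  have hbR : (b : ℝ) = (b.num : ℝ) / (b.den : ℝ) := by rw [Rat.cast_def]
  have hφ0 : (d : ℝ) * ((a : ℝ) + (b : ℝ) * Real.sqrt 2) = φ z₀ := by
    rw [φ_apply]
    show ((((a.den : ℤ) * (b.den : ℤ)) : ℤ) : ℝ) * _ =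
      (((a.num * (b.den : ℤ)) : ℤ) : ℝ) + (((b.num * (a.den : ℤ)) : ℤ) : ℝ) * Real.sqrt 2
    push_cast
    rw [haR, hbR]
    field_simp
  set K : ℝ := max (|ψ z₀|) ((d : ℝ) * (2 + Real.sqrt 2) / 2) with hKdef
  have hK : (d : ℝ) * (2 + Real.sqrt 2) / 2 ≤ K := le_max_right _ _
  have hPs : P d K ((a : ℝ) + (b : ℝ) * Real.sqrt 2) :=
    ⟨hs0, hs2, z₀, hφ0, le_max_left _ _⟩
  have key : ∀ n, P d K (f^[n] ((a : ℝ) + (b : ℝ) * Real.sqrt 2)) := by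
    intro n
    induction n with
    | zero => simpa using hPs
    | succ n ih =>
        rw [Function.iterate_succ_apply']
        exact step f hf d K hdpos hK ih
  exact (P_finite d K hdpos).subset (by rintro _ ⟨n, rfl⟩; exact key n)
end
end
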